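/- Let D ≥ 1 be an integer, let φ : ℝ_+^D → ℝ be Lipschitz and ℝ_+^D-increasing, let H : ℝ_+^D → ℝ be locally Lipschitz, ℝ_+^D-increasing, convex and bounded below, and let t ≥ 0. Then for every x ∈ ℝ_+^D, sup_{y ∈ ℝ_+^D} { φ(x+y) − (tH)*(y) } = sup_{x' ∈ ℝ_+^D} { φ(x') − (tH)*(x'−x) }, where (tH)*(y) = sup_{p ∈ ℝ_+^D} (p·y − tH(p)). -/

import Mathlib

open MeasureTheory
open scoped NNReal

/-- The nonnegative orthant `ℝ_+^D` in `ℝ^D`. -/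
def orthant (D : ℕ) : Set (EuclideanSpace ℝ (Fin D)) := {x | ∀ i, 0 ≤ x i}

/-- The monotone conjugate `(tH)*(y) = sup_{p ∈ ℝ_+^D} (p·y − tH(p))`, valued in
`ℝ ∪ {+∞}` (formalized as `EReal`). -/
noncomputable def tConj (D : ℕ) (t : ℝ) (H : EuclideanSpace ℝ (Fin D) → ℝ)
    (y : EuclideanSpace ℝ (Fin D)) : EReal :=
  ⨆ p : orthant D, (((inner ℝ p.1 y : ℝ) - t * H p.1 : ℝ) : EReal)

lemma tConj_posPart (D : ℕ) (t : ℝ) (ht : 0 ≤ t) (H : EuclideanSpace ℝ (Fin D) → ℝ)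
    (hHmono : ∀ x ∈ orthant D, ∀ y ∈ orthant D, H x ≤ H (x + y))
    (y : EuclideanSpace ℝ (Fin D)) :
    tConj D t H y = tConj D t H (WithLp.toLp 2 (fun i => max (y i) 0)) := by
  apply le_antisymm
  · apply iSup_le
    rintro ⟨p, hp⟩
    apply le_iSup_of_le ⟨p, hp⟩
    apply EReal.coe_le_coe_iff.mpr
    apply sub_le_sub_right
    simp only [PiLp.inner_apply, RCLike.inner_apply, conj_trivial]
    apply Finset.sum_le_sum
    intro i _
    exact mul_le_mul_of_nonneg_right (le_max_left _ _) (hp i)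
  · apply iSup_le
    rintro ⟨p, hp⟩
    set p' : EuclideanSpace ℝ (Fin D) := WithLp.toLp 2 (fun i => if 0 ≤ y i then p i else 0) with hp'def
    have hp' : p' ∈ orthant D := by
      intro i
      simp only [hp'def]
      split
      · exact hp i
      · exact le_refl 0
    apply le_iSup_of_le ⟨p', hp'⟩
    apply EReal.coe_le_coe_iff.mpr
    have hinner : (inner ℝ p (WithLp.toLp 2 (fun i => max (y i) 0) : EuclideanSpace ℝ (Fin D)) : ℝ)
        = (inner ℝ p' y : ℝ) := by
      simp only [PiLp.inner_apply, RCLike.inner_apply, conj_trivial]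
      apply Finset.sum_congr rfl
      intro i _
      by_cases h : 0 ≤ y i
      · simp [hp'def, h, max_eq_left h]
      · simp [hp'def, h, max_eq_right (le_of_not_ge h)]
    have hH : H p' ≤ H p := by
      have hd : (p - p') ∈ orthant D := by
        intro i
        simp only [PiLp.sub_apply, hp'def]
        split
        · simp
        · simpa using hp i
      have h2 := hHmono p' hp' (p - p') hd
      simpa using h2
    rw [hinner]
    exact sub_le_sub le_rfl (mul_le_mul_of_nonneg_left hH ht)

/-- for `φ` Lipschitz and `ℝ_+^D`-increasing and `H` locally Lipschitz,
`ℝ_+^D`-increasing, convex and bounded below, the two Hopf–Lax formulas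
`sup_{y ∈ ℝ_+^D} (φ(x+y) − (tH)*(y))` and `sup_{x' ∈ ℝ_+^D} (φ(x') − (tH)*(x'−x))`
coincide for every `x ∈ ℝ_+^D`. -/
theorem hopfLax_eq_shifted (D : ℕ) (hD : 1 ≤ D)
    (φ : EuclideanSpace ℝ (Fin D) → ℝ) (K : ℝ≥0)
    (hφlip : LipschitzOnWith K φ (orthant D))
    (hφmono : ∀ x ∈ orthant D, ∀ y ∈ orthant D, φ x ≤ φ (x + y))
    (H : EuclideanSpace ℝ (Fin D) → ℝ)
    (hHloc : ∀ x ∈ orthant D, ∃ (K' : ℝ≥0) (ε : ℝ), 0 < ε ∧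
      LipschitzOnWith K' H (orthant D ∩ Metric.ball x ε))
    (hHmono : ∀ x ∈ orthant D, ∀ y ∈ orthant D, H x ≤ H (x + y))
    (hHconv : ConvexOn ℝ (orthant D) H)
    (hHbdd : ∃ m : ℝ, ∀ x ∈ orthant D, m ≤ H x)
    (t : ℝ) (ht : 0 ≤ t)
    (x : EuclideanSpace ℝ (Fin D)) (hx : x ∈ orthant D) :
    (⨆ y : orthant D, ((φ (x + y.1) : EReal) - tConj D t H y.1)) =
      ⨆ x' : orthant D, ((φ x'.1 : EReal) - tConj D t H (x'.1 - x)) := by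
  apply le_antisymm
  · apply iSup_le
    rintro ⟨y, hy⟩
    have hxy : x + y ∈ orthant D := by
      intro i
      simpa using add_nonneg (hx i) (hy i)
    apply le_iSup_of_le ⟨x + y, hxy⟩
    simp only [add_sub_cancel_left]
    exact le_rfl
  · apply iSup_le
    rintro ⟨x', hx'⟩
    set y : EuclideanSpace ℝ (Fin D) := WithLp.toLp 2 (fun i => max (x' i - x i) 0) with hydef
    have hy : y ∈ orthant D := fun i => le_max_right _ _
    apply le_iSup_of_le ⟨y, hy⟩
    have hconj : tConj D t H (x' - x) = tConj D t H y := by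
      rw [tConj_posPart D t ht H hHmono (x' - x)]
      congr 1
    have hz : x + y - x' ∈ orthant D := by
      intro i
      simp only [PiLp.sub_apply, PiLp.add_apply, hydef]
      rcases le_total (x' i - x i) 0 with h | h
      · rw [max_eq_right h]; linarith
      · rw [max_eq_left h]; linarith
    have hφ : φ x' ≤ φ (x + y) := by
      have h2 := hφmono x' hx' (x + y - x') hz
      simpa using h2
    rw [hconj]
    exact EReal.sub_le_sub (EReal.coe_le_coe_iff.mpr hφ) le_rfl
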